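/- Let A be a Banach algebra and a ∈ A a compact element (L_a R_a is a compact operator on A). Then the closed two-sided ideal of A generated by a is bicompact, i.e., for all elements u, v of this ideal, the operator L_u R_v on A is compact. -/

import Mathlib

section Defs

variable (B : Type*) [NonUnitalNormedRing B] [NormedSpace ℂ B]
  [SMulCommClass ℂ B B] [IsScalarTower ℂ B B]

/-- A closed two-sided ideal of a (not necessarily unital) complex normed algebra. -/
structure ClosedIdeal where
  carrier : Submodule ℂ B
  isClosed : IsClosed (carrier : Set B)
  mul_mem_left : ∀ (x : B) ⦃a : B⦄, a ∈ carrier → x * a ∈ carrier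
  mul_mem_right : ∀ (x : B) ⦃a : B⦄, a ∈ carrier → a * x ∈ carrier

variable {B}

/-- The two-sided multiplication map `W_b : x ↦ b x b` as a linear map. -/
def Wop (b : B) : B →ₗ[ℂ] B where
  toFun x := b * x * b
  map_add' x y := by simp [mul_add, add_mul]
  map_smul' c x := by simp [mul_smul_comm, smul_mul_assoc]

/-- An element `b` of a Banach algebra is *compact* if `x ↦ b x b` is a compact operator. -/
def IsCompactElem (b : B) : Prop := IsCompactOperator (Wop b)

end Defs

section Instances

variable {B : Type*} [NonUnitalNormedRing B] [NormedSpace ℂ B]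
  [SMulCommClass ℂ B B] [IsScalarTower ℂ B B]

namespace ClosedIdeal

instance (J : ClosedIdeal B) : Mul J.carrier :=
  ⟨fun x y => ⟨(x : B) * y, J.mul_mem_left x y.2⟩⟩

@[simp] theorem coe_mul (J : ClosedIdeal B) (x y : J.carrier) :
    ((x * y : J.carrier) : B) = (x : B) * y := rfl

instance (J : ClosedIdeal B) : NonUnitalNormedRing J.carrier :=
  { (inferInstance : NormedAddCommGroup J.carrier) with
    mul := (· * ·)
    mul_assoc := fun x y z => Subtype.ext (mul_assoc (x : B) y z)
    left_distrib := fun x y z => Subtype.ext (mul_add (x : B) y z)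
    right_distrib := fun x y z => Subtype.ext (add_mul (x : B) y z)
    zero_mul := fun x => Subtype.ext (zero_mul (x : B))
    mul_zero := fun x => Subtype.ext (mul_zero (x : B))
    norm_mul_le := fun x y => norm_mul_le (x : B) y }

instance (J : ClosedIdeal B) : SMulCommClass ℂ J.carrier J.carrier :=
  ⟨fun c x y => Subtype.ext (mul_smul_comm c (x : B) y).symm⟩

instance (J : ClosedIdeal B) : IsScalarTower ℂ J.carrier J.carrier :=
  ⟨fun c x y => Subtype.ext (smul_mul_assoc c (x : B) y)⟩

instance (J : ClosedIdeal B) [CompleteSpace B] : CompleteSpace J.carrier :=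
  J.isClosed.completeSpace_coe

end ClosedIdeal

end Instances

section QuotInstances

variable {B : Type*} [NonUnitalNormedRing B] [NormedSpace ℂ B]
  [SMulCommClass ℂ B B] [IsScalarTower ℂ B B] (J : ClosedIdeal B)

instance : Mul (B ⧸ J.carrier) :=
  ⟨Quotient.map₂ (· * ·) (by
    intro a a' ha b b' hb
    replace ha : a - a' ∈ J.carrier := (Submodule.quotientRel_def _).mp ha
    replace hb : b - b' ∈ J.carrier := (Submodule.quotientRel_def _).mp hb
    refine (Submodule.quotientRel_def _).mpr ?_
    have h : a * b - a' * b' = a * (b - b') + (a - a') * b' := by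
      rw [mul_sub, sub_mul]; abel
    rw [h]
    exact J.carrier.add_mem (J.mul_mem_left a hb) (J.mul_mem_right b' ha))⟩

@[simp] theorem ClosedIdeal.mk_mul (a b : B) :
    (Submodule.Quotient.mk (a * b) : B ⧸ J.carrier) =
      Submodule.Quotient.mk a * Submodule.Quotient.mk b := rfl

end QuotInstances

section QuotRing

variable {B : Type*} [NonUnitalNormedRing B] [NormedSpace ℂ B]
  [SMulCommClass ℂ B B] [IsScalarTower ℂ B B] (J : ClosedIdeal B)

noncomputable instance : NormedAddCommGroup (B ⧸ J.carrier) :=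
  have : IsClosed ((J.carrier : Submodule ℂ B) : Set B) := J.isClosed
  Submodule.Quotient.normedAddCommGroup J.carrier

noncomputable instance : NonUnitalNormedRing (B ⧸ J.carrier) :=
  { (inferInstance : NormedAddCommGroup (B ⧸ J.carrier)) with
    mul := (· * ·)
    mul_assoc := fun q1 q2 q3 => Quotient.inductionOn₃ q1 q2 q3 fun a b c =>
      congrArg Submodule.Quotient.mk (mul_assoc a b c)
    left_distrib := fun q1 q2 q3 => Quotient.inductionOn₃ q1 q2 q3 fun a b c =>
      congrArg Submodule.Quotient.mk (mul_add a b c)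
    right_distrib := fun q1 q2 q3 => Quotient.inductionOn₃ q1 q2 q3 fun a b c =>
      congrArg Submodule.Quotient.mk (add_mul a b c)
    zero_mul := fun q => Quotient.inductionOn q fun a =>
      congrArg Submodule.Quotient.mk (zero_mul a)
    mul_zero := fun q => Quotient.inductionOn q fun a =>
      congrArg Submodule.Quotient.mk (mul_zero a)
    norm_mul_le := fun q1 q2 => by
      have key : ∀ ε : ℝ, 0 < ε → ‖q1 * q2‖ ≤ (‖q1‖ + ε) * (‖q2‖ + ε) := by
        intro ε hε
        obtain ⟨a, rfl, ha⟩ := Submodule.Quotient.norm_mk_lt q1 hε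
        obtain ⟨b, rfl, hb⟩ := Submodule.Quotient.norm_mk_lt q2 hε
        calc ‖(Submodule.Quotient.mk a : B ⧸ J.carrier) * Submodule.Quotient.mk b‖
            = ‖(Submodule.Quotient.mk (a * b) : B ⧸ J.carrier)‖ := by
              rw [ClosedIdeal.mk_mul]
          _ ≤ ‖a * b‖ := Submodule.Quotient.norm_mk_le _ _
          _ ≤ ‖a‖ * ‖b‖ := norm_mul_le a b
          _ ≤ (‖(Submodule.Quotient.mk a : B ⧸ J.carrier)‖ + ε) *
                (‖(Submodule.Quotient.mk b : B ⧸ J.carrier)‖ + ε) := by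
              apply mul_le_mul ha.le hb.le (norm_nonneg b)
              positivity
      have cont : Filter.Tendsto (fun ε : ℝ => (‖q1‖ + ε) * (‖q2‖ + ε))
          (nhdsWithin 0 (Set.Ioi 0)) (nhds (‖q1‖ * ‖q2‖)) := by
        have h0 : Filter.Tendsto (fun ε : ℝ => (‖q1‖ + ε) * (‖q2‖ + ε))
            (nhds 0) (nhds ((‖q1‖ + 0) * (‖q2‖ + 0))) :=
          Continuous.tendsto (by continuity) 0
        simpa using h0.mono_left nhdsWithin_le_nhds
      exact ge_of_tendsto cont
        (Filter.eventually_of_mem self_mem_nhdsWithin fun ε hε => key ε hε) }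

noncomputable instance : SMulCommClass ℂ (B ⧸ J.carrier) (B ⧸ J.carrier) :=
  ⟨fun c q1 q2 => Quotient.inductionOn₂ q1 q2 fun a b =>
    congrArg Submodule.Quotient.mk (mul_smul_comm c a b).symm⟩

noncomputable instance : IsScalarTower ℂ (B ⧸ J.carrier) (B ⧸ J.carrier) :=
  ⟨fun c q1 q2 => Quotient.inductionOn₂ q1 q2 fun a b =>
    congrArg Submodule.Quotient.mk (smul_mul_assoc c a b)⟩

end QuotRing

section Hypo

variable (B : Type*) [NonUnitalNormedRing B] [NormedSpace ℂ B]
  [SMulCommClass ℂ B B] [IsScalarTower ℂ B B]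

/-- A Banach algebra is *hypocompact* if every nonzero quotient by a closed
two-sided ideal contains a nonzero compact element. -/
def IsHypocompact : Prop :=
  ∀ J : ClosedIdeal B, J.carrier ≠ ⊤ →
    ∃ q : B ⧸ J.carrier, q ≠ 0 ∧ IsCompactElem q

end Hypo

/-- The closed two-sided ideal of a (unital) Banach algebra generated by `a`:
the closure of the linear span of `{u a v : u, v ∈ A}`. -/
noncomputable def closedIdealGen {A : Type*} [NormedRing A] [NormedAlgebra ℂ A]
    (a : A) : Submodule ℂ A :=
  (Submodule.span ℂ {x | ∃ u v : A, x = u * a * v}).topologicalClosure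

/-- if `a` is a compact element of a Banach algebra `A`, then the
closed ideal of `A` generated by `a` is bicompact: `L_u R_v` is a compact
operator for all `u, v` in this ideal. -/
theorem closedIdealGen_bicompact {A : Type*} [NormedRing A] [NormedAlgebra ℂ A]
    [CompleteSpace A] (a : A) (ha : IsCompactElem a) :
    ∀ u ∈ closedIdealGen a, ∀ v ∈ closedIdealGen a,
      IsCompactOperator (fun x : A => u * x * v) := by
  classical
  set S : Set A := {x | ∃ u v : A, x = u * a * v} with hS
  set Φ : A →L[ℂ] A →L[ℂ] A →L[ℂ] A := ContinuousLinearMap.mulLeftRight ℂ A with hΦ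
  have hfun : ∀ u v : A, ⇑(Φ u v) = fun x : A => u * x * v := fun u v =>
    funext fun x => ContinuousLinearMap.mulLeftRight_apply ℂ A u v x
  -- base case: both in S
  have base : ∀ u ∈ S, ∀ v ∈ S, IsCompactOperator (fun x : A => u * x * v) := by
    rintro _ ⟨p, q, rfl⟩ _ ⟨r, s, rfl⟩
    have h1 : (fun x : A => p * a * q * x * (r * a * s)) =
        (⇑(Φ p s)) ∘ (⇑(Wop a)) ∘ (⇑(Φ q r)) := by
      funext x
      simp only [Function.comp_apply, hfun, Wop, LinearMap.coe_mk, AddHom.coe_mk]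
      simp only [mul_assoc]
    rw [h1]
    exact ((ha.comp_clm (Φ q r)).clm_comp (Φ p s))
  -- extend to the span in both variables
  have span_case : ∀ u ∈ Submodule.span ℂ S, ∀ v ∈ Submodule.span ℂ S,
      IsCompactOperator (fun x : A => u * x * v) := by
    intro u hu
    induction hu using Submodule.span_induction with
    | mem u hu =>
      intro v hv
      induction hv using Submodule.span_induction with
      | mem v hv => exact base u hu v hv
      | zero =>
        have : (fun x : A => u * x * (0 : A)) = (0 : A → A) := by
          funext x; simp
        rw [this]; exact isCompactOperator_zero
      | add x y _ _ hx hy =>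
        have : (fun z : A => u * z * (x + y)) =
            (fun z : A => u * z * x) + fun z : A => u * z * y := by
          funext z; simp [mul_add]
        rw [this]; exact hx.add hy
      | smul c x _ hx =>
        have : (fun z : A => u * z * (c • x)) = c • fun z : A => u * z * x := by
          funext z; simp [mul_smul_comm]
        rw [this]; exact hx.smul c
    | zero =>
      intro v hv
      have : (fun x : A => (0 : A) * x * v) = (0 : A → A) := by funext x; simp
      rw [this]; exact isCompactOperator_zero
    | add x y _ _ hx hy =>
      intro v hv
      have : (fun z : A => (x + y) * z * v) =
          (fun z : A => x * z * v) + fun z : A => y * z * v := by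
        funext z; simp [add_mul]
      rw [this]; exact (hx v hv).add (hy v hv)
    | smul c x _ hx =>
      intro v hv
      have : (fun z : A => (c • x) * z * v) = c • fun z : A => x * z * v := by
        funext z; simp [smul_mul_assoc]
      rw [this]; exact (hx v hv).smul c
  -- the set of compact operators is closed
  have hC : IsClosed {T : A →L[ℂ] A | IsCompactOperator T} :=
    isClosed_setOf_isCompactOperator
  -- extend to the closure in the first variable
  have step1 : ∀ v ∈ Submodule.span ℂ S, ∀ u ∈ closedIdealGen a,
      IsCompactOperator (fun x : A => u * x * v) := by
    intro v hv u hu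
    have hcont : Continuous fun u : A => Φ u v :=
      ((ContinuousLinearMap.apply ℂ (A →L[ℂ] A) v).comp Φ).continuous
    have hclosed : IsClosed {u : A | IsCompactOperator ⇑(Φ u v)} :=
      hC.preimage hcont
    have hsub : (Submodule.span ℂ S : Set A) ⊆ {u : A | IsCompactOperator ⇑(Φ u v)} := by
      intro u hu
      show IsCompactOperator ⇑(Φ u v)
      rw [hfun]; exact span_case u hu v hv
    have hmem : u ∈ closure (Submodule.span ℂ S : Set A) := hu
    have := closure_minimal hsub hclosed hmem
    rw [← hfun u v]; exact this
  -- extend to the closure in the second variable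
  intro u hu v hv
  have hcont : Continuous fun v : A => Φ u v := (Φ u).continuous
  have hclosed : IsClosed {v : A | IsCompactOperator ⇑(Φ u v)} := hC.preimage hcont
  have hsub : (Submodule.span ℂ S : Set A) ⊆ {v : A | IsCompactOperator ⇑(Φ u v)} := by
    intro v hv
    show IsCompactOperator ⇑(Φ u v)
    rw [hfun]; exact step1 v hv u hu
  have hmem : v ∈ closure (Submodule.span ℂ S : Set A) := hv
  have := closure_minimal hsub hclosed hmem
  rw [← hfun u v]; exact this
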